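/- For all positive semidefinite matrices a, b, c, d of the same dimension, tr(|(a+b)^{1/2}(c+d)^{1/2}|) ≥ tr(|a^{1/2}c^{1/2}|) + tr(|b^{1/2}d^{1/2}|). -/

import Mathlib

open scoped Matrix ComplexOrder

/-- The positive square root of a positive semidefinite matrix (junk value `0` otherwise). -/
noncomputable def matSqrt {d : ℕ} (x : Matrix (Fin d) (Fin d) ℂ) : Matrix (Fin d) (Fin d) ℂ :=
  @dite _ x.PosSemidef (Classical.propDecidable _) (fun h => h.1.eigenvectorUnitary.1 * Matrix.diagonal ((↑) ∘ (√·) ∘ h.1.eigenvalues) *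
    (star h.1.eigenvectorUnitary : Matrix (Fin d) (Fin d) ℂ)) (fun _ => 0)

/-- The absolute value `|x| = (xᴴx)^{1/2}` of a matrix. -/
noncomputable def matAbs {d : ℕ} (x : Matrix (Fin d) (Fin d) ℂ) : Matrix (Fin d) (Fin d) ℂ :=
  matSqrt (xᴴ * x)

/-- Fidelity `F(σ,ρ) = tr |σ^{1/2} ρ^{1/2}|`. -/
noncomputable def fid {d : ℕ} (σ ρ : Matrix (Fin d) (Fin d) ℂ) : ℝ :=
  (matAbs (matSqrt σ * matSqrt ρ)).trace.re

/-- Bures distance `d_B(σ,ρ) = √(1 - F(σ,ρ))`. -/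
noncomputable def dB {d : ℕ} (σ ρ : Matrix (Fin d) (Fin d) ℂ) : ℝ :=
  Real.sqrt (1 - fid σ ρ)

open Matrix

namespace FidAux
variable {n : ℕ}

noncomputable def fc {P : Matrix (Fin n) (Fin n) ℂ} (hP : P.IsHermitian) (f : ℝ → ℝ) :
    Matrix (Fin n) (Fin n) ℂ :=
  (hP.eigenvectorUnitary : Matrix (Fin n) (Fin n) ℂ) *
    diagonal (fun i => (f (hP.eigenvalues i) : ℂ)) *
    star (hP.eigenvectorUnitary : Matrix (Fin n) (Fin n) ℂ)

lemma fc_mul {P : Matrix (Fin n) (Fin n) ℂ} (hP : P.IsHermitian) (f g : ℝ → ℝ) :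
    fc hP f * fc hP g = fc hP (fun x => f x * g x) := by
  unfold fc
  have h1 : star (hP.eigenvectorUnitary : Matrix (Fin n) (Fin n) ℂ) *
      (hP.eigenvectorUnitary : Matrix (Fin n) (Fin n) ℂ) = 1 :=
    (Matrix.mem_unitaryGroup_iff').mp (hP.eigenvectorUnitary).2
  have h1' : ∀ M : Matrix (Fin n) (Fin n) ℂ,
      star (hP.eigenvectorUnitary : Matrix (Fin n) (Fin n) ℂ) *
        ((hP.eigenvectorUnitary : Matrix (Fin n) (Fin n) ℂ) * M) = M := fun M => by
    rw [← Matrix.mul_assoc, h1, Matrix.one_mul]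
  calc _ = (hP.eigenvectorUnitary : Matrix (Fin n) (Fin n) ℂ) *
      (diagonal (fun i => (f (hP.eigenvalues i) : ℂ)) * diagonal (fun i => (g (hP.eigenvalues i) : ℂ))) *
      star (hP.eigenvectorUnitary : Matrix (Fin n) (Fin n) ℂ) := by
        simp only [Matrix.mul_assoc, h1']
    _ = _ := by rw [diagonal_mul_diagonal]; congr 2; funext i; push_cast; ring

lemma fc_herm {P : Matrix (Fin n) (Fin n) ℂ} (hP : P.IsHermitian) (f : ℝ → ℝ) :
    (fc hP f)ᴴ = fc hP f := by
  unfold fc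
  simp only [conjTranspose_mul, conjTranspose_conjTranspose, star_eq_conjTranspose,
    diagonal_conjTranspose, Matrix.mul_assoc]
  congr 1
  · congr 1
    funext i
    simp [Pi.star_def, Complex.conj_ofReal]

lemma fc_id {P : Matrix (Fin n) (Fin n) ℂ} (hP : P.IsHermitian) :
    fc hP (fun x => x) = P := by
  conv_rhs => rw [hP.spectral_theorem]
  rfl

lemma fc_congr {P : Matrix (Fin n) (Fin n) ℂ} (hP : P.IsHermitian) {f g : ℝ → ℝ}
    (h : ∀ x, f x = g x) : fc hP f = fc hP g := by
  have : f = g := funext h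
  rw [this]

/-- pseudoinverse of a Hermitian matrix -/
noncomputable def pinv {P : Matrix (Fin n) (Fin n) ℂ} (hP : P.IsHermitian) :
    Matrix (Fin n) (Fin n) ℂ := fc hP (fun x => x⁻¹)

/-- projection onto the range of a Hermitian matrix -/
noncomputable def rproj {P : Matrix (Fin n) (Fin n) ℂ} (hP : P.IsHermitian) :
    Matrix (Fin n) (Fin n) ℂ := fc hP (fun x => x * x⁻¹)

variable {P : Matrix (Fin n) (Fin n) ℂ} (hP : P.IsHermitian)

lemma pinv_herm : (pinv hP)ᴴ = pinv hP := fc_herm hP _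
lemma rproj_herm : (rproj hP)ᴴ = rproj hP := fc_herm hP _

lemma mul_pinv : P * pinv hP = rproj hP := by
  have h := fc_mul hP (fun x => x) (fun x => x⁻¹)
  rw [fc_id] at h
  exact h.trans (fc_congr hP fun x => rfl)

lemma pinv_mul : pinv hP * P = rproj hP := by
  have h := fc_mul hP (fun x => x⁻¹) (fun x => x)
  rw [fc_id] at h
  exact h.trans (fc_congr hP fun x => by ring)

lemma rproj_mul : rproj hP * P = P := by
  have h := fc_mul hP (fun x => x * x⁻¹) (fun x => x)
  rw [fc_id] at h
  rw [rproj, h, fc_congr hP (g := fun x => x)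
    (fun x => by rcases eq_or_ne x 0 with h0 | h0 <;> field_simp), fc_id]

lemma mul_rproj : P * rproj hP = P := by
  have h := fc_mul hP (fun x => x) (fun x => x * x⁻¹)
  rw [fc_id] at h
  rw [rproj, h, fc_congr hP (g := fun x => x)
    (fun x => by rcases eq_or_ne x 0 with h0 | h0 <;> field_simp), fc_id]

lemma rproj_idem : rproj hP * rproj hP = rproj hP := by
  rw [rproj, fc_mul]
  exact fc_congr hP fun x => by rcases eq_or_ne x 0 with h | h <;> field_simp

lemma pinv_PP_pinv : pinv hP * (P * P) * pinv hP = rproj hP := by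
  rw [show pinv hP * (P * P) * pinv hP = (pinv hP * P) * (P * pinv hP) by
    simp only [Matrix.mul_assoc], pinv_mul, mul_pinv, rproj_idem]

lemma rproj_pinv : rproj hP * pinv hP = pinv hP := by
  rw [rproj, pinv, fc_mul]
  exact fc_congr hP fun x => by rcases eq_or_ne x 0 with h | h <;> field_simp

lemma pinv_rproj : pinv hP * rproj hP = pinv hP := by
  rw [rproj, pinv, fc_mul]
  exact fc_congr hP fun x => by rcases eq_or_ne x 0 with h | h <;> field_simp

lemma pinv2_PP_pinv2 : (pinv hP * pinv hP) * (P * P) * (pinv hP * pinv hP)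
    = pinv hP * pinv hP := by
  calc (pinv hP * pinv hP) * (P * P) * (pinv hP * pinv hP)
      = pinv hP * ((pinv hP * P) * ((P * pinv hP) * pinv hP)) := by
        simp only [Matrix.mul_assoc]
    _ = pinv hP * pinv hP := by
        rw [pinv_mul, mul_pinv, rproj_pinv, rproj_pinv]

noncomputable def _root_.Matrix.PosSemidef.sqrt {M : Matrix (Fin n) (Fin n) ℂ} (hM : M.PosSemidef) :
    Matrix (Fin n) (Fin n) ℂ := fc hM.1 Real.sqrt

lemma _root_.Matrix.PosSemidef.sqrt_mul_self {M : Matrix (Fin n) (Fin n) ℂ} (hM : M.PosSemidef) :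
    hM.sqrt * hM.sqrt = M := by
  rw [Matrix.PosSemidef.sqrt, fc_mul]
  conv_rhs => rw [← fc_id hM.1]
  unfold fc
  refine congrArg (· * _) (congrArg (_ * ·) (congrArg diagonal (funext fun i => ?_)))
  show ((Real.sqrt (hM.1.eigenvalues i) * Real.sqrt (hM.1.eigenvalues i) : ℝ) : ℂ)
    = ((hM.1.eigenvalues i : ℝ) : ℂ)
  rw [Real.mul_self_sqrt (hM.eigenvalues_nonneg i)]

lemma _root_.Matrix.PosSemidef.posSemidef_sqrt {M : Matrix (Fin n) (Fin n) ℂ} (hM : M.PosSemidef) :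
    hM.sqrt.PosSemidef := by
  have hD : (diagonal (fun i => ((Real.sqrt (hM.1.eigenvalues i) : ℝ) : ℂ))).PosSemidef :=
    posSemidef_diagonal_iff.mpr (fun i => Complex.zero_le_real.mpr (Real.sqrt_nonneg _))
  exact hD.mul_mul_conjTranspose_same _

/-- squared norm of a vector -/
noncomputable def nsq (v : Fin n → ℂ) : ℝ := (star v ⬝ᵥ v).re

lemma nsq_nonneg (v : Fin n → ℂ) : 0 ≤ nsq v := by
  have h := dotProduct_star_self_nonneg v
  rw [Complex.le_def] at h
  exact h.1

lemma re_dot_le (u w : Fin n → ℂ) :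
    (star u ⬝ᵥ w).re ≤ Real.sqrt (nsq u) * Real.sqrt (nsq w) := by
  let x : EuclideanSpace ℂ (Fin n) := (WithLp.equiv 2 _).symm u
  let y : EuclideanSpace ℂ (Fin n) := (WithLp.equiv 2 _).symm w
  have h1 : star u ⬝ᵥ w = inner ℂ x y := by
    rw [EuclideanSpace.inner_eq_star_dotProduct, dotProduct_comm]; rfl
  have hxu : nsq u = ‖x‖ ^ 2 := by
    have h2 : star u ⬝ᵥ u = inner ℂ x x := by
      rw [EuclideanSpace.inner_eq_star_dotProduct, dotProduct_comm]; rfl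
    have h3 := inner_self_eq_norm_sq (𝕜 := ℂ) x
    rw [nsq, h2]
    rw [← h3]
    rfl
  have hyw : nsq w = ‖y‖ ^ 2 := by
    have h2 : star w ⬝ᵥ w = inner ℂ y y := by
      rw [EuclideanSpace.inner_eq_star_dotProduct, dotProduct_comm]; rfl
    have h3 := inner_self_eq_norm_sq (𝕜 := ℂ) y
    rw [nsq, h2, ← h3]
    rfl
  calc (star u ⬝ᵥ w).re = RCLike.re (inner ℂ x y : ℂ) := by rw [h1]; rfl
    _ ≤ ‖(inner ℂ x y : ℂ)‖ := RCLike.re_le_norm _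
    _ ≤ ‖x‖ * ‖y‖ := norm_inner_le_norm x y
    _ = Real.sqrt (nsq u) * Real.sqrt (nsq w) := by
        rw [hxu, hyw, Real.sqrt_sq (norm_nonneg _), Real.sqrt_sq (norm_nonneg _)]

lemma quad_conjT_mul (M : Matrix (Fin n) (Fin n) ℂ) (v : Fin n → ℂ) :
    star v ⬝ᵥ (Mᴴ * M) *ᵥ v = star (M *ᵥ v) ⬝ᵥ (M *ᵥ v) := by
  rw [← mulVec_mulVec, dotProduct_mulVec, ← star_mulVec]

lemma nsq_mulVec (M : Matrix (Fin n) (Fin n) ℂ) (v : Fin n → ℂ) :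
    nsq (M *ᵥ v) = (star v ⬝ᵥ (Mᴴ * M) *ᵥ v).re := by
  rw [quad_conjT_mul]; rfl

lemma proj_quad_le {R : Matrix (Fin n) (Fin n) ℂ} (hR : Rᴴ = R) (hRR : R * R = R)
    (v : Fin n → ℂ) : (star v ⬝ᵥ R *ᵥ v).re ≤ nsq v := by
  have h1 : (1 - R)ᴴ * (1 - R) = 1 - R := by
    rw [conjTranspose_sub, conjTranspose_one, hR, Matrix.sub_mul, Matrix.one_mul,
      Matrix.mul_sub, Matrix.mul_one, hRR]
    abel
  have h2 : 0 ≤ nsq ((1 - R) *ᵥ v) := nsq_nonneg _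
  rw [nsq_mulVec, h1, Matrix.sub_mulVec, Matrix.one_mulVec, dotProduct_sub,
    Complex.sub_re] at h2
  rw [nsq]
  linarith

lemma proj_quad_nonneg {R : Matrix (Fin n) (Fin n) ℂ} (hR : Rᴴ = R) (hRR : R * R = R)
    (v : Fin n → ℂ) : 0 ≤ (star v ⬝ᵥ R *ᵥ v).re := by
  have h2 : 0 ≤ nsq (R *ᵥ v) := nsq_nonneg _
  rwa [nsq_mulVec, hR, hRR] at h2

lemma diag_entry_eq (r C : Matrix (Fin n) (Fin n) ℂ) (hr : rᴴ = r) (i : Fin n) :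
    (r * (C * r)) i i = star (fun j => r j i) ⬝ᵥ (C *ᵥ fun j => r j i) := by
  have hconj : ∀ j, (star (fun j => r j i)) j = r i j := fun j => by
    have := congrFun (congrFun hr i) j
    rw [conjTranspose_apply] at this
    simpa [Pi.star_def] using this
  simp only [Matrix.mul_apply, dotProduct, mulVec, dotProduct]
  refine Finset.sum_congr rfl fun j _ => ?_
  rw [hconj j]

lemma trace_re_le (C P : Matrix (Fin n) (Fin n) ℂ) (hP : P.PosSemidef)
    (hC : ∀ v, nsq (C *ᵥ v) ≤ nsq v) : ((C * P).trace).re ≤ P.trace.re := by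
  set r := hP.sqrt with hrdef
  have hrr : r * r = P := hP.sqrt_mul_self
  have hrh : rᴴ = r := hP.posSemidef_sqrt.1
  have htr : (C * P).trace = (r * (C * r)).trace := by
    rw [← hrr, ← Matrix.mul_assoc]
    exact Matrix.trace_mul_comm _ _
  have key : ∀ i, ((r * (C * r)) i i).re
      ≤ ((r * ((1 : Matrix (Fin n) (Fin n) ℂ) * r)) i i).re := by
    intro i
    rw [diag_entry_eq r C hrh, diag_entry_eq r 1 hrh, Matrix.one_mulVec]
    set u := fun j => r j i with hu
    calc (star u ⬝ᵥ C *ᵥ u).re ≤ Real.sqrt (nsq u) * Real.sqrt (nsq (C *ᵥ u)) := re_dot_le _ _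
      _ ≤ Real.sqrt (nsq u) * Real.sqrt (nsq u) :=
          mul_le_mul_of_nonneg_left (Real.sqrt_le_sqrt (hC u)) (Real.sqrt_nonneg _)
      _ = nsq u := Real.mul_self_sqrt (nsq_nonneg u)
      _ = (star u ⬝ᵥ u).re := rfl
  have h3 : P.trace = (r * (1 * r)).trace := by rw [Matrix.one_mul, hrr]
  rw [htr, h3, Matrix.trace, Matrix.trace, Complex.re_sum, Complex.re_sum]
  exact Finset.sum_le_sum fun i _ => key i


lemma eq_zero_of_conjT_add {M L : Matrix (Fin n) (Fin n) ℂ}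
    (h : Mᴴ * M + Lᴴ * L = 0) : M = 0 := by
  have hv : ∀ v, M *ᵥ v = 0 := by
    intro v
    have h0 : star v ⬝ᵥ (Mᴴ * M + Lᴴ * L) *ᵥ v = 0 := by
      rw [h, Matrix.zero_mulVec, dotProduct_zero]
    rw [Matrix.add_mulVec, dotProduct_add, quad_conjT_mul, quad_conjT_mul] at h0
    have h1 := dotProduct_star_self_nonneg (M *ᵥ v)
    have h2 := dotProduct_star_self_nonneg (L *ᵥ v)
    have h3 : star (M *ᵥ v) ⬝ᵥ (M *ᵥ v) = 0 :=
      le_antisymm (by rw [← h0]; exact le_add_of_nonneg_right h2) h1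
    exact dotProduct_star_self_eq_zero.mp h3
  ext i j
  have := congrFun (hv (Pi.single j 1)) i
  simpa using this

lemma row_contract {L N T : Matrix (Fin n) (Fin n) ℂ}
    (hT : L * Lᴴ + N * Nᴴ = T) (hTh : Tᴴ = T) (hTT : T * T = T) (x y : Fin n → ℂ) :
    nsq (L *ᵥ x + N *ᵥ y) ≤ nsq x + nsq y := by
  set z := L *ᵥ x + N *ᵥ y with hz
  have hsplit : nsq z = (star z ⬝ᵥ L *ᵥ x).re + (star z ⬝ᵥ N *ᵥ y).re := by
    rw [nsq, hz, dotProduct_add, Complex.add_re]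
  have hLx : (star z ⬝ᵥ L *ᵥ x).re ≤ Real.sqrt (nsq (Lᴴ *ᵥ z)) * Real.sqrt (nsq x) := by
    have e : star (Lᴴ *ᵥ z) = star z ᵥ* L := by
      rw [star_mulVec, conjTranspose_conjTranspose]
    rw [dotProduct_mulVec, ← e]
    exact re_dot_le _ _
  have hNy : (star z ⬝ᵥ N *ᵥ y).re ≤ Real.sqrt (nsq (Nᴴ *ᵥ z)) * Real.sqrt (nsq y) := by
    have e : star (Nᴴ *ᵥ z) = star z ᵥ* N := by
      rw [star_mulVec, conjTranspose_conjTranspose]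
    rw [dotProduct_mulVec, ← e]
    exact re_dot_le _ _
  have hsum : nsq (Lᴴ *ᵥ z) + nsq (Nᴴ *ᵥ z) ≤ nsq z := by
    have hadd : star z ⬝ᵥ (L * Lᴴ) *ᵥ z + star z ⬝ᵥ (N * Nᴴ) *ᵥ z = star z ⬝ᵥ T *ᵥ z := by
      rw [← hT, Matrix.add_mulVec, dotProduct_add]
    calc nsq (Lᴴ *ᵥ z) + nsq (Nᴴ *ᵥ z)
        = (star z ⬝ᵥ (L * Lᴴ) *ᵥ z).re + (star z ⬝ᵥ (N * Nᴴ) *ᵥ z).re := by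
          rw [nsq_mulVec, nsq_mulVec, conjTranspose_conjTranspose, conjTranspose_conjTranspose]
      _ = (star z ⬝ᵥ T *ᵥ z).re := by rw [← Complex.add_re, hadd]
      _ ≤ nsq z := proj_quad_le hTh hTT z
  set p := Real.sqrt (nsq (Lᴴ *ᵥ z)) with hp
  set q := Real.sqrt (nsq (Nᴴ *ᵥ z)) with hq
  set e := Real.sqrt (nsq x) with he
  set f := Real.sqrt (nsq y) with hf
  have hm : nsq z ≤ p * e + q * f := by rw [hsplit]; exact add_le_add hLx hNy
  have hp2 : p ^ 2 + q ^ 2 ≤ nsq z := by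
    rw [hp, hq, Real.sq_sqrt (nsq_nonneg _), Real.sq_sqrt (nsq_nonneg _)]
    exact hsum
  have he2 : e ^ 2 = nsq x := Real.sq_sqrt (nsq_nonneg x)
  have hf2 : f ^ 2 = nsq y := Real.sq_sqrt (nsq_nonneg y)
  have hpn : 0 ≤ p := Real.sqrt_nonneg _
  have hqn : 0 ≤ q := Real.sqrt_nonneg _
  have hen : 0 ≤ e := Real.sqrt_nonneg _
  have hfn : 0 ≤ f := Real.sqrt_nonneg _
  have hzn : 0 ≤ nsq z := nsq_nonneg _
  rw [← he2, ← hf2]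
  nlinarith [sq_nonneg (p * f - q * e), sq_nonneg (p * e + q * f - nsq z),
    mul_nonneg hpn hen, mul_nonneg hqn hfn, sq_nonneg (e ^ 2 + f ^ 2 - nsq z)]


lemma range_sqrt {a b s : Matrix (Fin n) (Fin n) ℂ} (ha : a.PosSemidef) (hb : b.PosSemidef)
    (hsh : s.IsHermitian) (hs2 : s * s = a + b) :
    ha.sqrt * rproj hsh = ha.sqrt := by
  have h1Q : (1 - rproj hsh)ᴴ = 1 - rproj hsh := by
    rw [conjTranspose_sub, conjTranspose_one, rproj_herm]
  have hexp : ∀ (x : Matrix (Fin n) (Fin n) ℂ) (hx : x.PosSemidef),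
      (hx.sqrt * (1 - rproj hsh))ᴴ * (hx.sqrt * (1 - rproj hsh))
        = (1 - rproj hsh) * (x * (1 - rproj hsh)) := by
    intro x hx
    rw [conjTranspose_mul, h1Q, hx.posSemidef_sqrt.1]
    calc (1 - rproj hsh) * hx.sqrt * (hx.sqrt * (1 - rproj hsh))
        = (1 - rproj hsh) * ((hx.sqrt * hx.sqrt) * (1 - rproj hsh)) := by
          simp only [Matrix.mul_assoc]
      _ = (1 - rproj hsh) * (x * (1 - rproj hsh)) := by rw [hx.sqrt_mul_self]
  have hzero : (ha.sqrt * (1 - rproj hsh))ᴴ * (ha.sqrt * (1 - rproj hsh))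
      + (hb.sqrt * (1 - rproj hsh))ᴴ * (hb.sqrt * (1 - rproj hsh)) = 0 := by
    rw [hexp a ha, hexp b hb]
    have hcombine : (1 - rproj hsh) * (a * (1 - rproj hsh))
        + (1 - rproj hsh) * (b * (1 - rproj hsh))
        = (1 - rproj hsh) * ((s * s) * (1 - rproj hsh)) := by
      rw [hs2, Matrix.add_mul, Matrix.mul_add]
    rw [hcombine]
    have hsq : s * (1 - rproj hsh) = 0 := by
      rw [Matrix.mul_sub, Matrix.mul_one, mul_rproj, sub_self]
    rw [Matrix.mul_assoc, hsq, Matrix.mul_zero, Matrix.mul_zero]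
  have hA0 : ha.sqrt * (1 - rproj hsh) = 0 := eq_zero_of_conjT_add hzero
  rw [Matrix.mul_sub, Matrix.mul_one, sub_eq_zero] at hA0
  exact hA0.symm

lemma range_sqrt' {a b s : Matrix (Fin n) (Fin n) ℂ} (ha : a.PosSemidef) (hb : b.PosSemidef)
    (hsh : s.IsHermitian) (hs2 : s * s = a + b) :
    rproj hsh * ha.sqrt = ha.sqrt := by
  have h := congrArg conjTranspose (range_sqrt ha hb hsh hs2)
  rwa [conjTranspose_mul, rproj_herm, ha.posSemidef_sqrt.1] at h

lemma pinv_conj_contract {X P : Matrix (Fin n) (Fin n) ℂ} (hPh : P.IsHermitian)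
    (hP2 : P * P = Xᴴ * X) (u : Fin n → ℂ) :
    nsq ((pinv hPh * Xᴴ) *ᵥ u) ≤ nsq u := by
  set R := X * ((pinv hPh * pinv hPh) * Xᴴ) with hR
  have hReq : (pinv hPh * Xᴴ)ᴴ * (pinv hPh * Xᴴ) = R := by
    rw [conjTranspose_mul, conjTranspose_conjTranspose, pinv_herm, hR]
    simp only [Matrix.mul_assoc]
  have hRh : Rᴴ = R := by
    rw [hR]
    simp only [conjTranspose_mul, conjTranspose_conjTranspose, pinv_herm]
    simp only [Matrix.mul_assoc]
  have hmid : (pinv hPh * pinv hPh) * ((Xᴴ * X) * (pinv hPh * pinv hPh))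
      = pinv hPh * pinv hPh := by
    rw [← hP2, ← Matrix.mul_assoc (pinv hPh * pinv hPh) (P * P) (pinv hPh * pinv hPh)]
    exact pinv2_PP_pinv2 hPh
  have hRR : R * R = R := by
    calc R * R = X * ((pinv hPh * pinv hPh) * ((Xᴴ * X) * (pinv hPh * pinv hPh))) * Xᴴ := by
          rw [hR]; simp only [Matrix.mul_assoc]
      _ = X * (pinv hPh * pinv hPh) * Xᴴ := by rw [hmid]
      _ = R := by rw [hR]; simp only [Matrix.mul_assoc]
  rw [nsq_mulVec, hReq]
  exact proj_quad_le hRh hRR u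

lemma mul_pinv_contract {Z P : Matrix (Fin n) (Fin n) ℂ} (hPh : P.IsHermitian)
    (hP2 : P * P = Zᴴ * Z) (v : Fin n → ℂ) : nsq ((Z * pinv hPh) *ᵥ v) ≤ nsq v := by
  have hWW : (Z * pinv hPh)ᴴ * (Z * pinv hPh) = rproj hPh := by
    rw [conjTranspose_mul, pinv_herm]
    calc pinv hPh * Zᴴ * (Z * pinv hPh) = pinv hPh * (Zᴴ * Z) * pinv hPh := by
          simp only [Matrix.mul_assoc]
      _ = rproj hPh := by rw [← hP2]; exact pinv_PP_pinv hPh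
  rw [nsq_mulVec, hWW]
  exact proj_quad_le (rproj_herm hPh) (rproj_idem hPh) v

lemma pair_contract {x1 x2 s : Matrix (Fin n) (Fin n) ℂ} (h1 : x1ᴴ = x1) (h2 : x2ᴴ = x2)
    (hsh : s.IsHermitian) (hsum : x1 * x1 + x2 * x2 = s * s) (w : Fin n → ℂ) :
    nsq ((x1 * pinv hsh) *ᵥ w) + nsq ((x2 * pinv hsh) *ᵥ w) ≤ nsq w := by
  have hm : ∀ (x : Matrix (Fin n) (Fin n) ℂ), xᴴ = x →
      (x * pinv hsh)ᴴ * (x * pinv hsh) = pinv hsh * ((x * x) * pinv hsh) := fun x hx => by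
    rw [conjTranspose_mul, pinv_herm, hx]
    simp only [Matrix.mul_assoc]
  have hQ : (x1 * pinv hsh)ᴴ * (x1 * pinv hsh) + (x2 * pinv hsh)ᴴ * (x2 * pinv hsh)
      = rproj hsh := by
    rw [hm x1 h1, hm x2 h2, ← Matrix.mul_add, ← Matrix.add_mul, hsum,
      ← Matrix.mul_assoc (pinv hsh) (s * s) (pinv hsh)]
    exact pinv_PP_pinv hsh
  calc nsq ((x1 * pinv hsh) *ᵥ w) + nsq ((x2 * pinv hsh) *ᵥ w)
      = (star w ⬝ᵥ (((x1 * pinv hsh)ᴴ * (x1 * pinv hsh))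
          + ((x2 * pinv hsh)ᴴ * (x2 * pinv hsh))) *ᵥ w).re := by
        rw [nsq_mulVec, nsq_mulVec, Matrix.add_mulVec, dotProduct_add, Complex.add_re]
    _ ≤ nsq w := by rw [hQ]; exact proj_quad_le (rproj_herm hsh) (rproj_idem hsh) w

lemma pair_rows {x1 x2 t : Matrix (Fin n) (Fin n) ℂ} (h1 : x1ᴴ = x1) (h2 : x2ᴴ = x2)
    (hth : t.IsHermitian) (hsum : x1 * x1 + x2 * x2 = t * t) :
    (pinv hth * x1) * (pinv hth * x1)ᴴ + (pinv hth * x2) * (pinv hth * x2)ᴴ = rproj hth := by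
  have hm : ∀ (x : Matrix (Fin n) (Fin n) ℂ), xᴴ = x →
      (pinv hth * x) * (pinv hth * x)ᴴ = pinv hth * ((x * x) * pinv hth) := fun x hx => by
    rw [conjTranspose_mul, pinv_herm, hx]
    simp only [Matrix.mul_assoc]
  rw [hm x1 h1, hm x2 h2, ← Matrix.mul_add, ← Matrix.add_mul, hsum,
    ← Matrix.mul_assoc (pinv hth) (t * t) (pinv hth)]
  exact pinv_PP_pinv hth

end FidAux

open FidAux

lemma matSqrt_eq {k : ℕ} {x : Matrix (Fin k) (Fin k) ℂ} (hx : x.PosSemidef) :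
    matSqrt x = hx.sqrt := dif_pos hx

lemma matAbs_eq {k : ℕ} (u : Matrix (Fin k) (Fin k) ℂ) :
    matAbs u = (Matrix.posSemidef_conjTranspose_mul_self u).sqrt := matSqrt_eq _

set_option maxHeartbeats 1600000 in
/-- superadditivity of the fidelity functional:
tr|(a+b)^{1/2}(c+d)^{1/2}| ≥ tr|a^{1/2}c^{1/2}| + tr|b^{1/2}d^{1/2}|. -/
theorem fidelity_superadditive {n : ℕ} (a b c d : Matrix (Fin n) (Fin n) ℂ)
    (ha : a.PosSemidef) (hb : b.PosSemidef) (hc : c.PosSemidef) (hd : d.PosSemidef) :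
    (matAbs (matSqrt a * matSqrt c)).trace.re + (matAbs (matSqrt b * matSqrt d)).trace.re ≤
      (matAbs (matSqrt (a + b) * matSqrt (c + d))).trace.re := by
  have hab : (a + b).PosSemidef := ha.add hb
  have hcd : (c + d).PosSemidef := hc.add hd
  rw [matSqrt_eq ha, matSqrt_eq hb, matSqrt_eq hc, matSqrt_eq hd, matSqrt_eq hab,
    matSqrt_eq hcd]
  set sA := ha.sqrt with hsAdef
  set sB := hb.sqrt with hsBdef
  set sC := hc.sqrt with hsCdef
  set sD := hd.sqrt with hsDdef
  set s := hab.sqrt with hsdef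
  set t := hcd.sqrt with htdef
  set X := sA * sC with hXdef
  set Y := sB * sD with hYdef
  set Z := s * t with hZdef
  obtain ⟨PX, hPXdef⟩ : ∃ P, P = matAbs X := ⟨_, rfl⟩
  obtain ⟨PY, hPYdef⟩ : ∃ P, P = matAbs Y := ⟨_, rfl⟩
  obtain ⟨PZ, hPZdef⟩ : ∃ P, P = matAbs Z := ⟨_, rfl⟩
  rw [← hPXdef, ← hPYdef, ← hPZdef]
  -- hermitian and square facts
  have hsAh : sAᴴ = sA := ha.posSemidef_sqrt.1
  have hsBh : sBᴴ = sB := hb.posSemidef_sqrt.1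
  have hsCh : sCᴴ = sC := hc.posSemidef_sqrt.1
  have hsDh : sDᴴ = sD := hd.posSemidef_sqrt.1
  have hsh : s.IsHermitian := hab.posSemidef_sqrt.1
  have hth : t.IsHermitian := hcd.posSemidef_sqrt.1
  have hsA2 : sA * sA = a := ha.sqrt_mul_self
  have hsB2 : sB * sB = b := hb.sqrt_mul_self
  have hsC2 : sC * sC = c := hc.sqrt_mul_self
  have hsD2 : sD * sD = d := hd.sqrt_mul_self
  have hs2 : s * s = a + b := hab.sqrt_mul_self
  have ht2 : t * t = c + d := hcd.sqrt_mul_self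
  have hPXp : PX.PosSemidef := by
    rw [hPXdef, matAbs_eq]; exact (Matrix.posSemidef_conjTranspose_mul_self X).posSemidef_sqrt
  have hPYp : PY.PosSemidef := by
    rw [hPYdef, matAbs_eq]; exact (Matrix.posSemidef_conjTranspose_mul_self Y).posSemidef_sqrt
  have hPZp : PZ.PosSemidef := by
    rw [hPZdef, matAbs_eq]; exact (Matrix.posSemidef_conjTranspose_mul_self Z).posSemidef_sqrt
  have hPXh : PX.IsHermitian := hPXp.1
  have hPYh : PY.IsHermitian := hPYp.1
  have hPZh : PZ.IsHermitian := hPZp.1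
  have hPX2 : PX * PX = Xᴴ * X := by
    rw [hPXdef, matAbs_eq]; exact (Matrix.posSemidef_conjTranspose_mul_self X).sqrt_mul_self
  have hPY2 : PY * PY = Yᴴ * Y := by
    rw [hPYdef, matAbs_eq]; exact (Matrix.posSemidef_conjTranspose_mul_self Y).sqrt_mul_self
  have hPZ2 : PZ * PZ = Zᴴ * Z := by
    rw [hPZdef, matAbs_eq]; exact (Matrix.posSemidef_conjTranspose_mul_self Z).sqrt_mul_self
  clear_value sA sB sC sD s t X Y Z
  -- abbreviations
  set si := pinv hsh with hsidef
  set ti := pinv hth with htidef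
  set PXi := pinv hPXh with hPXidef
  set PYi := pinv hPYh with hPYidef
  set PZi := pinv hPZh with hPZidef
  set D1 := PXi * Xᴴ with hD1def
  set D2 := PYi * Yᴴ with hD2def
  set K1 := sA * si with hK1def
  set K2 := sB * si with hK2def
  set L1 := ti * sC with hL1def
  set N1 := ti * sD with hN1def
  set W := Z * PZi with hWdef
  set C1 := L1 * (D1 * K1) with hC1def
  set C2 := N1 * (D2 * K2) with hC2def
  set CF := (C1 + C2) * W with hCFdef
  clear_value si ti PXi PYi PZi D1 D2 K1 K2 L1 N1 W C1 C2 CF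
  -- range facts
  have hs2' : s * s = b + a := by rw [hs2, add_comm]
  have ht2' : t * t = d + c := by rw [ht2, add_comm]
  have hrA : sA * rproj hsh = sA := by rw [hsAdef]; exact range_sqrt ha hb hsh hs2
  have hrB : sB * rproj hsh = sB := by rw [hsBdef]; exact range_sqrt hb ha hsh hs2'
  have hrC' : rproj hth * sC = sC := by rw [hsCdef]; exact range_sqrt' hc hd hth ht2
  have hrD' : rproj hth * sD = sD := by rw [hsDdef]; exact range_sqrt' hd hc hth ht2'
  -- factorization of X and Y through Z
  have hXfact : K1 * (Z * L1) = X := by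
    rw [hK1def, hL1def, hZdef, hXdef, hsidef, htidef]
    calc (sA * pinv hsh) * ((s * t) * (pinv hth * sC))
        = sA * ((pinv hsh * s) * ((t * pinv hth) * sC)) := by simp only [Matrix.mul_assoc]
      _ = sA * (rproj hsh * (rproj hth * sC)) := by rw [pinv_mul hsh, mul_pinv hth]
      _ = sA * sC := by rw [hrC', ← Matrix.mul_assoc, hrA]
  have hYfact : K2 * (Z * N1) = Y := by
    rw [hK2def, hN1def, hZdef, hYdef, hsidef, htidef]
    calc (sB * pinv hsh) * ((s * t) * (pinv hth * sD))
        = sB * ((pinv hsh * s) * ((t * pinv hth) * sD)) := by simp only [Matrix.mul_assoc]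
      _ = sB * (rproj hsh * (rproj hth * sD)) := by rw [pinv_mul hsh, mul_pinv hth]
      _ = sB * sD := by rw [hrD', ← Matrix.mul_assoc, hrB]
  have hD1X : D1 * X = PX := by
    rw [hD1def, hPXidef, Matrix.mul_assoc, ← hPX2, ← Matrix.mul_assoc, pinv_mul hPXh,
      rproj_mul hPXh]
  have hD2Y : D2 * Y = PY := by
    rw [hD2def, hPYidef, Matrix.mul_assoc, ← hPY2, ← Matrix.mul_assoc, pinv_mul hPYh,
      rproj_mul hPYh]
  -- Z = W * PZ
  have hZQ : Z * rproj hPZh = Z := by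
    have h1Q : (1 - rproj hPZh)ᴴ = 1 - rproj hPZh := by
      rw [conjTranspose_sub, conjTranspose_one, rproj_herm]
    have hPZ1Q : PZ * (1 - rproj hPZh) = 0 := by
      rw [Matrix.mul_sub, Matrix.mul_one, mul_rproj, sub_self]
    have h0 : (Z * (1 - rproj hPZh))ᴴ * (Z * (1 - rproj hPZh)) = 0 := by
      rw [conjTranspose_mul, h1Q]
      calc (1 - rproj hPZh) * Zᴴ * (Z * (1 - rproj hPZh))
          = (1 - rproj hPZh) * ((Zᴴ * Z) * (1 - rproj hPZh)) := by
            simp only [Matrix.mul_assoc]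
        _ = (1 - rproj hPZh) * ((PZ * PZ) * (1 - rproj hPZh)) := by rw [hPZ2]
        _ = 0 := by rw [Matrix.mul_assoc, hPZ1Q, Matrix.mul_zero, Matrix.mul_zero]
    have hZ1Q : Z * (1 - rproj hPZh) = 0 := conjTranspose_mul_self_eq_zero.mp h0
    rw [Matrix.mul_sub, Matrix.mul_one, sub_eq_zero] at hZ1Q
    exact hZ1Q.symm
  have hWPZ : W * PZ = Z := by rw [hWdef, hPZidef, Matrix.mul_assoc, pinv_mul hPZh, hZQ]
  -- trace identities
  have htrX : PX.trace = (C1 * Z).trace := by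
    calc PX.trace = (D1 * X).trace := by rw [hD1X]
      _ = (D1 * (K1 * (Z * L1))).trace := by rw [hXfact]
      _ = ((D1 * K1) * (Z * L1)).trace := by rw [Matrix.mul_assoc D1 K1 (Z * L1)]
      _ = ((Z * L1) * (D1 * K1)).trace := Matrix.trace_mul_comm _ _
      _ = (Z * C1).trace := by rw [hC1def]; simp only [Matrix.mul_assoc]
      _ = (C1 * Z).trace := Matrix.trace_mul_comm _ _
  have htrY : PY.trace = (C2 * Z).trace := by
    calc PY.trace = (D2 * Y).trace := by rw [hD2Y]
      _ = (D2 * (K2 * (Z * N1))).trace := by rw [hYfact]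
      _ = ((D2 * K2) * (Z * N1)).trace := by rw [Matrix.mul_assoc D2 K2 (Z * N1)]
      _ = ((Z * N1) * (D2 * K2)).trace := Matrix.trace_mul_comm _ _
      _ = (Z * C2).trace := by rw [hC2def]; simp only [Matrix.mul_assoc]
      _ = (C2 * Z).trace := Matrix.trace_mul_comm _ _
  have htrsum : (C1 * Z).trace + (C2 * Z).trace = (CF * PZ).trace := by
    rw [← Matrix.trace_add, ← Matrix.add_mul, ← hWPZ, hCFdef,
      Matrix.mul_assoc (C1 + C2) W PZ]
  -- contraction property
  have hsumS : sA * sA + sB * sB = s * s := by rw [hsA2, hsB2, hs2]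
  have hsumT : sC * sC + sD * sD = t * t := by rw [hsC2, hsD2, ht2]
  have hrows : L1 * L1ᴴ + N1 * N1ᴴ = rproj hth := by
    rw [hL1def, hN1def, htidef]
    exact pair_rows hsCh hsDh hth hsumT
  have hcontr : ∀ v, nsq (CF *ᵥ v) ≤ nsq v := by
    intro v
    have e1 : CF *ᵥ v = (C1 + C2) *ᵥ (W *ᵥ v) := by
      rw [hCFdef]; simp only [Matrix.mulVec_mulVec]
    have e2 : C1 *ᵥ (W *ᵥ v) = L1 *ᵥ (D1 *ᵥ (K1 *ᵥ (W *ᵥ v))) := by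
      rw [hC1def]; simp only [Matrix.mulVec_mulVec, Matrix.mul_assoc]
    have e3 : C2 *ᵥ (W *ᵥ v) = N1 *ᵥ (D2 *ᵥ (K2 *ᵥ (W *ᵥ v))) := by
      rw [hC2def]; simp only [Matrix.mulVec_mulVec, Matrix.mul_assoc]
    set w := W *ᵥ v with hwdef
    set x := D1 *ᵥ (K1 *ᵥ w) with hxdef
    set y := D2 *ᵥ (K2 *ᵥ w) with hydef
    clear_value w x y
    have hw : nsq w ≤ nsq v := by
      rw [hwdef, hWdef, hPZidef]
      exact mul_pinv_contract hPZh hPZ2 v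
    have hx : nsq x ≤ nsq (K1 *ᵥ w) := by
      rw [hxdef, hD1def, hPXidef]
      exact pinv_conj_contract hPXh hPX2 (K1 *ᵥ w)
    have hy : nsq y ≤ nsq (K2 *ᵥ w) := by
      rw [hydef, hD2def, hPYidef]
      exact pinv_conj_contract hPYh hPY2 (K2 *ᵥ w)
    have hpair : nsq (K1 *ᵥ w) + nsq (K2 *ᵥ w) ≤ nsq w := by
      rw [hK1def, hK2def, hsidef]
      exact pair_contract hsAh hsBh hsh hsumS w
    have hrow : nsq (L1 *ᵥ x + N1 *ᵥ y) ≤ nsq x + nsq y :=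
      row_contract hrows (rproj_herm hth) (rproj_idem hth) x y
    calc nsq (CF *ᵥ v) = nsq (L1 *ᵥ x + N1 *ᵥ y) := by
          rw [e1, Matrix.add_mulVec, e2, e3]
      _ ≤ nsq x + nsq y := hrow
      _ ≤ nsq (K1 *ᵥ w) + nsq (K2 *ᵥ w) := add_le_add hx hy
      _ ≤ nsq w := hpair
      _ ≤ nsq v := hw
  calc PX.trace.re + PY.trace.re = ((C1 * Z).trace + (C2 * Z).trace).re := by
        rw [htrX, htrY, Complex.add_re]
    _ = ((CF * PZ).trace).re := by rw [htrsum]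
    _ ≤ PZ.trace.re := trace_re_le CF PZ hPZp hcontr
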